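/- The following are equivalent: (a) every connected graph with degrees in {2,3} in which every cycle is separating decomposes into a spanning tree and a matching; (b) every connected graph with degrees in {1,2,3} in which every cycle is separating decomposes into a spanning tree and a matching. -/

import Mathlib

open SimpleGraph

/-- The degree of a vertex (as the cardinality of its neighbor set). -/
noncomputable def deg {V : Type} (G : SimpleGraph V) (v : V) : ℕ := (G.neighborSet v).ncard

/-- A set of edges forms a matching: no two of its edges share a vertex. -/
def IsMatchingSet {V : Type} (M : Set (Sym2 V)) : Prop :=
  ∀ v : V, {e ∈ M | v ∈ e}.Subsingleton

/-- Decomposition of `G` into a spanning tree (with edge set `T`) and a matching `M`. -/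
def IsTM {V : Type} (G : SimpleGraph V) (T M : Set (Sym2 V)) : Prop :=
  T ∪ M = G.edgeSet ∧ Disjoint T M ∧
  (SimpleGraph.fromEdgeSet T).Connected ∧ (SimpleGraph.fromEdgeSet T).IsAcyclic ∧
  IsMatchingSet M

/-- `G` decomposes into a spanning tree and a matching. -/
def HasTM {V : Type} (G : SimpleGraph V) : Prop := ∃ T M, IsTM G T M

/-- Every cycle of `G` is separating: deleting its edges disconnects the graph. -/
def Separating {V : Type} (G : SimpleGraph V) : Prop :=
  ∀ (v : V) (c : G.Walk v v), c.IsCycle →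
    ¬ (G.deleteEdges {e | e ∈ c.edges}).Connected

set_option linter.unusedSectionVars false

namespace S7
open Sum

variable {V : Type}

abbrev W (G : SimpleGraph V) : Type := V ⊕ ({v : V // deg G v = 1} × Bool)

def HG (G : SimpleGraph V) : SimpleGraph (W G) where
  Adj x y := match x, y with
    | inl u, inl w => G.Adj u w
    | inl u, inr q => q.1.1 = u
    | inr q, inl u => q.1.1 = u
    | inr q, inr r => q.1 = r.1 ∧ q.2 ≠ r.2
  symm := by
    constructor
    rintro (u | ⟨p, i⟩) (w | ⟨q, j⟩) h
    · exact h.symm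
    · exact h
    · exact h
    · exact ⟨h.1.symm, h.2.symm⟩
  loopless := by
    constructor
    rintro (u | ⟨p, i⟩) h
    · exact G.loopless.irrefl u h
    · exact h.2 rfl

variable {G : SimpleGraph V}

lemma adj_inl_inl {u w : V} : (HG G).Adj (inl u) (inl w) ↔ G.Adj u w := Iff.rfl
lemma adj_inl_inr {u : V} {q} : (HG G).Adj (inl u) (inr q) ↔ q.1.1 = u := Iff.rfl
lemma adj_inr_inl {u : V} {q} : (HG G).Adj (inr q) (inl u) ↔ q.1.1 = u := Iff.rfl
lemma adj_inr_inr {q r} : (HG G).Adj (inr q) (inr r) ↔ q.1 = r.1 ∧ q.2 ≠ r.2 := Iff.rfl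

def homInl (G : SimpleGraph V) : G →g HG G := ⟨inl, fun h => h⟩

def pr (G : SimpleGraph V) : W G → V := Sum.elim id (fun q => q.1.1)

lemma nbr_inr (q) : (HG G).neighborSet (inr q) = {inl q.1.1, inr (q.1, !q.2)} := by
  ext (w | ⟨r, j⟩)
  · simp only [mem_neighborSet, adj_inr_inl, Set.mem_insert_iff, Set.mem_singleton_iff]
    constructor
    · rintro rfl; left; rfl
    · rintro (h | h)
      · exact (inl.inj h).symm
      · exact absurd h (by simp)
  · simp only [mem_neighborSet, adj_inr_inr, Set.mem_insert_iff, Set.mem_singleton_iff]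
    constructor
    · rintro ⟨h1, h2⟩; right
      cases q with
      | mk a i => cases h1; cases i <;> cases j <;> simp_all
    · rintro (h | h)
      · exact absurd h (by simp)
      · have h' := inr.inj h
        obtain ⟨rfl, rfl⟩ : r = q.1 ∧ j = !q.2 := ⟨congrArg Prod.fst h', congrArg Prod.snd h'⟩
        exact ⟨rfl, by simp⟩

lemma nbr_inl_leaf {u : V} (h : deg G u = 1) :
    (HG G).neighborSet (inl u) =
      inl '' G.neighborSet u ∪ {inr (⟨u, h⟩, true), inr (⟨u, h⟩, false)} := by
  ext (w | ⟨r, j⟩)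
  · simp only [mem_neighborSet, adj_inl_inl, Set.mem_union, Set.mem_image,
      Set.mem_insert_iff, Set.mem_singleton_iff]
    constructor
    · intro hadj; exact Or.inl ⟨w, hadj, rfl⟩
    · rintro (⟨y, hy, hyw⟩ | (h | h)) <;> first | (cases inl.inj hyw; exact hy) | simp_all
  · simp only [mem_neighborSet, adj_inl_inr, Set.mem_union, Set.mem_image,
      Set.mem_insert_iff, Set.mem_singleton_iff]
    constructor
    · rintro rfl
      right
      have : r = ⟨r.1, r.2⟩ := rfl
      obtain ⟨v, hv⟩ := r
      cases j <;> simp [Subtype.ext_iff]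
    · rintro (⟨y, hy, hyw⟩ | (hh | hh))
      · exact absurd hyw (by simp)
      · cases inr.inj hh; rfl
      · cases inr.inj hh; rfl

lemma nbr_inl_nonleaf {u : V} (h : deg G u ≠ 1) :
    (HG G).neighborSet (inl u) = inl '' G.neighborSet u := by
  ext (w | ⟨r, j⟩)
  · simp only [mem_neighborSet, adj_inl_inl, Set.mem_image]
    exact ⟨fun hadj => ⟨w, hadj, rfl⟩, by rintro ⟨y, hy, hyw⟩; cases inl.inj hyw; exact hy⟩
  · simp only [mem_neighborSet, adj_inl_inr, Set.mem_image]
    constructor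
    · rintro rfl; exact absurd r.2 h
    · rintro ⟨y, _, hyw⟩; exact absurd hyw (by simp)

variable [Finite V]

instance : Finite (W G) := by infer_instance

lemma deg_inr (q) : deg (HG G) (inr q) = 2 := by
  rw [deg, nbr_inr, Set.ncard_pair (by simp)]

lemma deg_inl (u : V) : deg (HG G) (inl u) = if deg G u = 1 then 3 else deg G u := by
  split_ifs with h
  · rw [deg, nbr_inl_leaf h, Set.ncard_union_eq (by rw [Set.disjoint_left]; rintro _ ⟨y, _, rfl⟩ (h|h) <;> simp_all) (Set.toFinite _) (Set.toFinite _),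
      Set.ncard_image_of_injective _ inl_injective]
    rw [Set.ncard_pair (by simp), show (G.neighborSet u).ncard = 1 from h]
  · rw [deg, nbr_inl_nonleaf h, Set.ncard_image_of_injective _ inl_injective]; rfl

omit [Finite V] in
lemma reach_pr (z : W G) : (HG G).Reachable z (inl (pr G z)) := by
  cases z with
  | inl u => exact Reachable.refl _
  | inr q => exact Adj.reachable (show (HG G).Adj (inr q) (inl q.1.1) from rfl)

omit [Finite V] in
lemma HG_connected (hG : G.Connected) : (HG G).Connected := by
  have : Nonempty V := hG.nonempty
  refine ⟨fun z w => ?_⟩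
  exact ((reach_pr z).trans ((hG.preconnected _ _).map (homInl G))).trans (reach_pr w).symm

omit [Finite V] in
/-- projection of reachability from a subgraph of `HG G` down to `V`. -/
lemma proj_walk {K : SimpleGraph (W G)} {G' : SimpleGraph V}
    (hK : K ≤ HG G) (hE : ∀ u w : V, K.Adj (inl u) (inl w) → G'.Adj u w)
    {z w : W G} (p : K.Walk z w) : G'.Reachable (pr G z) (pr G w) := by
  induction p with
  | nil => exact Reachable.refl _
  | @cons a b _ h _ ih =>
    refine Reachable.trans ?_ ih
    cases a with
    | inl u =>
      cases b with
      | inl w' => exact (hE u w' h).reachable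
      | inr q =>
        have hq : q.1.1 = u := hK h
        rw [show pr G (inl u) = u from rfl, show pr G (inr q) = q.1.1 from rfl, hq]
    | inr q =>
      cases b with
      | inl w' =>
        have hq : q.1.1 = w' := hK h
        rw [show pr G (inr q) = q.1.1 from rfl, show pr G (inl w') = w' from rfl, hq]
      | inr r =>
        have hq : q.1 = r.1 := (hK h).1
        rw [show pr G (inr q) = q.1.1 from rfl, show pr G (inr r) = r.1.1 from rfl, hq]

omit [Finite V] in
/-- lift a walk of `HG G` whose support lies in `inl` to a walk of `G`. -/
lemma lift_walk {x w : W G} (p : (HG G).Walk x w) :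
    ∀ {u v : V} (hx : x = inl u) (hw : w = inl v),
      (∀ z ∈ p.support, ∃ y : V, z = inl y) →
      ∃ q : G.Walk u v, q.map (homInl G) = p.copy hx hw := by
  induction p with
  | nil =>
    intro u v hx hw _
    subst hx
    cases inl.inj hw
    exact ⟨Walk.nil, by simp; rfl⟩
  | @cons a b _ h p ih =>
    intro u v hx hw hs
    subst hx
    obtain ⟨y, rfl⟩ : ∃ y, b = inl y := hs b (by simp)
    obtain ⟨q, hq⟩ := ih rfl hw (fun z hz => hs z (by simp [hz]))
    refine ⟨Walk.cons (adj_inl_inl.mp h) q, ?_⟩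
    rw [Walk.copy_cons, Walk.map_cons, hq]
    rfl

omit [Finite V] in
lemma isolated_eq {K : SimpleGraph (W G)} {x : W G} (h : ∀ y, ¬K.Adj x y) {y : W G}
    (hr : K.Reachable x y) : x = y := by
  obtain ⟨p⟩ := hr
  cases p with
  | nil => rfl
  | cons ha _ => exact absurd ha (h _)

/-- a cycle uses two distinct edges at its root. -/
lemma cycle_two_edges_root {W' : Type} {K : SimpleGraph W'} {x : W'} {c : K.Walk x x}
    (hc : c.IsCycle) : ∃ y z, y ≠ z ∧ s(x, y) ∈ c.edges ∧ s(x, z) ∈ c.edges := by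
  cases c with
  | nil => exact absurd hc (by simp [Walk.isCycle_def])
  | @cons _ b _ h p =>
    have hnodup : (Walk.cons h p).edges.Nodup := hc.edges_nodup
    cases hrev : p.reverse with
    | nil => exact absurd h (K.loopless.irrefl x)
    | @cons _ b' _ h2 q =>
      refine ⟨b, b', ?_, by simp, ?_⟩
      · rintro rfl
        have hmem : s(x, b) ∈ p.edges := by
          have : s(x, b) ∈ p.reverse.edges := by rw [hrev]; simp [Sym2.eq_swap]
          rwa [Walk.edges_reverse, List.mem_reverse] at this
        simp only [Walk.edges_cons, List.nodup_cons] at hnodup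
        exact hnodup.1 hmem
      · have : s(x, b') ∈ p.reverse.edges := by rw [hrev]; simp
        rw [Walk.edges_reverse, List.mem_reverse] at this
        simp [this]

lemma cycle_two_edges {W' : Type} {K : SimpleGraph W'} {v x : W'} {c : K.Walk v v}
    (hc : c.IsCycle) (hx : x ∈ c.support) :
    ∃ y z, y ≠ z ∧ s(x, y) ∈ c.edges ∧ s(x, z) ∈ c.edges := by
  have := Classical.decEq W'
  obtain ⟨y, z, h1, h2, h3⟩ := cycle_two_edges_root (hc.rotate hx)
  have hperm := c.rotate_edges x hx
  exact ⟨y, z, h1, hperm.perm.subset h2, hperm.perm.subset h3⟩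

omit [Finite V] in
lemma HG_separating (hG : G.Connected) (hsep : Separating G) : Separating (HG G) := by
  classical
  intro v₀ c hc hcon
  rcases Classical.em (∀ z ∈ c.support, ∃ y : V, z = inl y) with hA | hA
  · -- all-inl cycle: lift to G and contradict separation there
    obtain ⟨x₀, rfl⟩ := hA v₀ c.start_mem_support
    obtain ⟨q, hq⟩ := lift_walk c rfl rfl hA
    rw [Walk.copy_rfl_rfl] at hq
    have hqc : q.IsCycle := by
      rw [← Walk.map_isCycle_iff_of_injective (f := homInl G) inl_injective, hq]; exact hc
    refine hsep x₀ q hqc ?_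
    have : Nonempty V := hG.nonempty
    refine ⟨fun u w => ?_⟩
    have hr := hcon.preconnected (inl u) (inl w)
    obtain ⟨p⟩ := hr
    have key := proj_walk (K := (HG G).deleteEdges {e | e ∈ c.edges})
      (G' := G.deleteEdges {e | e ∈ q.edges}) (deleteEdges_le _) ?_ p
    · exact key
    · intro u' w' h
      rw [deleteEdges_adj] at h ⊢
      refine ⟨h.1, fun hmem => h.2 ?_⟩
      have hce : c.edges = List.map (Sym2.map (homInl G)) q.edges := by
        subst hq; exact Walk.edges_map _ _
      rw [hce]
      have : Sym2.map (homInl G) s(u', w') ∈ List.map (Sym2.map (homInl G)) q.edges :=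
        List.mem_map_of_mem hmem
      exact this
  · -- the cycle meets a gadget vertex; that vertex is isolated after deletion
    push_neg at hA
    obtain ⟨z, hzs, hz⟩ := hA
    obtain ⟨r, rfl⟩ : ∃ r, z = inr r := by
      cases z with
      | inl u => exact absurd rfl (hz u)
      | inr r => exact ⟨r, rfl⟩
    obtain ⟨y, z', hyz, hy, hz'⟩ := cycle_two_edges hc hzs
    have hyA : y ∈ ({inl r.1.1, inr (r.1, !r.2)} : Set (W G)) := by
      rw [← nbr_inr]; exact (Walk.adj_of_mem_edges c hy)
    have hzA : z' ∈ ({inl r.1.1, inr (r.1, !r.2)} : Set (W G)) := by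
      rw [← nbr_inr]; exact (Walk.adj_of_mem_edges c hz')
    have hboth : s(inr r, inl r.1.1) ∈ c.edges ∧ s(inr r, inr (r.1, !r.2)) ∈ c.edges := by
      rcases hyA with rfl | rfl <;> rcases hzA with rfl | rfl
      · exact absurd rfl hyz
      · exact ⟨hy, hz'⟩
      · exact ⟨hz', hy⟩
      · exact absurd rfl hyz
    have hiso : ∀ t, ¬((HG G).deleteEdges {e | e ∈ c.edges}).Adj (inr r) t := by
      intro t ht
      rw [deleteEdges_adj] at ht
      have : t ∈ ({inl r.1.1, inr (r.1, !r.2)} : Set (W G)) := by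
        rw [← nbr_inr]; exact ht.1
      rcases this with rfl | rfl
      · exact ht.2 hboth.1
      · exact ht.2 hboth.2
    have := isolated_eq hiso (hcon.preconnected (inr r) (inl r.1.1))
    simp at this

omit [Finite V] in
lemma edge_pre : (Sym2.map (@inl V ({v : V // deg G v = 1} × Bool))) ⁻¹' (HG G).edgeSet
    = G.edgeSet := by
  ext e
  induction e with
  | _ a b =>
    simp only [Set.mem_preimage, Sym2.map_pair_eq, mem_edgeSet]
    exact adj_inl_inl

omit [Finite V] in
lemma hasTM_of_HG (hG : G.Connected) (h : HasTM (HG G)) : HasTM G := by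
  obtain ⟨T, M, hU, hD, hC, hA, hM⟩ := h
  have : Nonempty V := hG.nonempty
  set f : Sym2 V → Sym2 (W G) := Sym2.map inl with hf
  have hfinj : Function.Injective f := Sym2.map.injective inl_injective
  refine ⟨f ⁻¹' T, f ⁻¹' M, ?_, ?_, ?_, ?_, ?_⟩
  · rw [← Set.preimage_union, hU, hf, edge_pre]
  · exact Set.disjoint_left.mpr fun e he he' => Set.disjoint_left.mp hD he he'
  · -- connectivity
    refine ⟨fun u w => ?_⟩
    obtain ⟨p⟩ := hC.preconnected (inl u) (inl w)
    have hTle : fromEdgeSet T ≤ HG G := by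
      rw [← fromEdgeSet_edgeSet (HG G)]
      exact fromEdgeSet_mono (hU ▸ Set.subset_union_left)
    exact proj_walk (K := fromEdgeSet T) (G' := fromEdgeSet (f ⁻¹' T)) hTle
      (fun u' w' hadj => by
        rw [fromEdgeSet_adj] at hadj ⊢
        refine ⟨?_, fun he => hadj.2 (by rw [he])⟩
        show Sym2.map inl s(u', w') ∈ T
        rw [Sym2.map_pair_eq]
        exact hadj.1) p
  · -- acyclicity
    let hhom : fromEdgeSet (f ⁻¹' T) →g fromEdgeSet T :=
      ⟨inl, by
        intro a b hab
        rw [fromEdgeSet_adj] at hab ⊢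
        refine ⟨?_, fun he => hab.2 (inl_injective he)⟩
        rw [← Sym2.map_pair_eq]
        exact hab.1⟩
    intro u q hq
    exact hA _ (hq.map (f := hhom) (fun a b h => inl_injective (show inl a = inl b from h)))
  · intro v e he e' he'
    have h1 : f e ∈ M ∧ (inl v : W G) ∈ f e := ⟨he.1, Sym2.mem_map.mpr ⟨v, he.2, rfl⟩⟩
    have h2 : f e' ∈ M ∧ (inl v : W G) ∈ f e' := ⟨he'.1, Sym2.mem_map.mpr ⟨v, he'.2, rfl⟩⟩
    exact hfinj (hM (inl v) h1 h2)

end S7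

/-- The 2-Decomposition Conjecture for `S_{2,3}` (degrees in
{2,3}, every cycle separating) is equivalent to its extension to `S_{1,3}`
(degrees in {1,2,3}). -/
theorem stmt_7 :
    (∀ (V : Type), Finite V → ∀ G : SimpleGraph V, G.Connected →
        (∀ v, deg G v = 2 ∨ deg G v = 3) → Separating G → HasTM G) ↔
    (∀ (V : Type), Finite V → ∀ G : SimpleGraph V, G.Connected →
        (∀ v, 1 ≤ deg G v ∧ deg G v ≤ 3) → Separating G → HasTM G) := by
  constructor
  · intro h23 V _ G hconn hdeg hsep
    have hHdeg : ∀ z, deg (S7.HG G) z = 2 ∨ deg (S7.HG G) z = 3 := by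
      rintro (u | q)
      · rw [S7.deg_inl]
        obtain ⟨h1, h3⟩ := hdeg u
        split_ifs with h
        · right; rfl
        · omega
      · left; exact S7.deg_inr q
    exact S7.hasTM_of_HG hconn
      (h23 _ inferInstance _ (S7.HG_connected hconn) hHdeg (S7.HG_separating hconn hsep))
  · intro h13 V hfin G hconn hdeg hsep
    refine h13 V hfin G hconn (fun v => ?_) hsep
    rcases hdeg v with h | h <;> omega
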